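/- arXiv:0812.1389 — 4 statements merged into one kernel-verified Lean document; each statement's English description precedes it below -/
import Mathlib

section
/- Let k ≥ 2 and let n₁, …, n_k be positive integers with n_k ≥ 2, and let N and the matrices M_t = [[a_t, b_t],[c_t, d_t]] (0 ≤ t ≤ N) be as defined below. Then for every t with 0 ≤ t ≤ N: gcd(a_t + c_t, b_t + d_t) = 1 and a_t + c_t > b_t + d_t ≥ 2. Moreover (a_0 + c_0, b_0 + d_0) = (2n₁ + 1, 2). (Thus each intermediate knot in the cabling sequence producing the middle tunnel is a torus knot, the first one being the (2n₁+1, 2) torus knot.) -/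
/-- The matrix `U = [[1,1],[0,1]]`. -/
def U : Matrix (Fin 2) (Fin 2) ℤ := !![1, 1; 0, 1]

/-- The matrix `L = [[1,0],[1,1]]`. -/
def L : Matrix (Fin 2) (Fin 2) ℤ := !![1, 0; 1, 1]

/-- The matrix `A_i` determined by `n₂, …, n_k`: `A_i = L` for `i < 0`, and for `i ≥ 0`
the letters alternate `U, L, U, L, …` in blocks of lengths `n₂, n₃, …, n_k`; that is,
`A_i = U` exactly when the number of partial sums `n₂ + ⋯ + n_j` (`2 ≤ j ≤ k`) that
are `≤ i` is even. -/
def Amat (n : ℕ → ℕ) (k : ℕ) (i : ℤ) : Matrix (Fin 2) (Fin 2) ℤ :=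
  if i < 0 then L
  else if Even ((Finset.Icc 2 k).filter
      (fun j => ((∑ m ∈ Finset.Icc 2 j, n m : ℕ) : ℤ) ≤ i)).card then U else L

/-- The product `M_t = A_t · A_{t−1} ⋯ A_0 · A_{−1} ⋯ A_{−n₁}`, with factors in
descending order of index. -/
def Mprod (n : ℕ → ℕ) (k : ℕ) (t : ℤ) : Matrix (Fin 2) (Fin 2) ℤ :=
  ((List.range (t + n 1 + 1).toNat).map (fun i => Amat n k (t - i))).prod

def MInv (M : Matrix (Fin 2) (Fin 2) ℤ) : Prop :=
  M 0 0 * M 1 1 - M 0 1 * M 1 0 = 1 ∧ 1 ≤ M 0 1 ∧ 1 ≤ M 1 1 ∧ M 0 1 < M 0 0 ∧ M 1 1 ≤ M 1 0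

lemma Mprod_eq (n : ℕ → ℕ) (k : ℕ) (t : ℤ) :
    Mprod n k t = ((List.range (t + n 1 + 1).toNat).map
      (fun i : ℕ => Amat n k (t - (i : ℤ)))).prod := by
  unfold Mprod; congr 1
  simp only [List.pure_def, List.bind_eq_flatMap, List.map_flatMap, List.map_cons, List.map_nil]
  rw [← List.map_eq_flatMap]

lemma AmatUL (n : ℕ → ℕ) (k : ℕ) (i : ℤ) : Amat n k i = U ∨ Amat n k i = L := by
  unfold Amat; split_ifs <;> simp

lemma mulU (M : Matrix (Fin 2) (Fin 2) ℤ) :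
    U * M = !![M 0 0 + M 1 0, M 0 1 + M 1 1; M 1 0, M 1 1] := by
  rw [show M = !![M 0 0, M 0 1; M 1 0, M 1 1] by ext i j; fin_cases i <;> fin_cases j <;> rfl]
  simp [U, Matrix.mul_fin_two]

lemma mulL (M : Matrix (Fin 2) (Fin 2) ℤ) :
    L * M = !![M 0 0, M 0 1; M 0 0 + M 1 0, M 0 1 + M 1 1] := by
  rw [show M = !![M 0 0, M 0 1; M 1 0, M 1 1] by ext i j; fin_cases i <;> fin_cases j <;> rfl]
  simp [L, Matrix.mul_fin_two]

lemma invU {M : Matrix (Fin 2) (Fin 2) ℤ} (h : MInv M) : MInv (U * M) := by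
  obtain ⟨h1, h2, h3, h4, h5⟩ := h
  rw [mulU]
  refine ⟨?_, ?_, ?_, ?_, ?_⟩ <;> simp <;> nlinarith [h1]

lemma invL {M : Matrix (Fin 2) (Fin 2) ℤ} (h : MInv M) : MInv (L * M) := by
  obtain ⟨h1, h2, h3, h4, h5⟩ := h
  rw [mulL]
  refine ⟨?_, ?_, ?_, ?_, ?_⟩ <;> simp <;> nlinarith [h1]

lemma prodLrep (f : ℕ → Matrix (Fin 2) (Fin 2) ℤ) (hf : ∀ i, f i = L) :
    ∀ m : ℕ, ((List.range m).map f).prod = !![1, 0; (m : ℤ), 1] := by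
  intro m
  induction m with
  | zero => ext i j; fin_cases i <;> fin_cases j <;> simp
  | succ m ih =>
      rw [List.range_succ, List.map_append, List.prod_append, ih]
      simp [hf, L, Matrix.mul_fin_two]

lemma Mprod_succ (n : ℕ → ℕ) (k : ℕ) (t : ℤ) (ht : 0 ≤ t) :
    Mprod n k (t + 1) = Amat n k (t + 1) * Mprod n k t := by
  rw [Mprod_eq, Mprod_eq]
  have h1 : (t + 1 + (n 1 : ℤ) + 1).toNat = (t + (n 1 : ℤ) + 1).toNat + 1 := by omega
  rw [h1, List.range_succ_eq_map, List.map_cons, List.prod_cons, List.map_map]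
  congr 1
  · norm_num
  · congr 1
    refine List.map_congr_left fun i _ => ?_
    simp only [Function.comp]; congr 1; push_cast; ring

lemma Amat_zero (n : ℕ → ℕ) (k : ℕ) (hn2 : 1 ≤ n 2) : Amat n k 0 = U := by
  unfold Amat
  rw [if_neg (by norm_num), if_pos]
  have he : ((Finset.Icc 2 k).filter
      (fun j => ((∑ m ∈ Finset.Icc 2 j, n m : ℕ) : ℤ) ≤ 0)) = ∅ := by
    rw [Finset.filter_eq_empty_iff]
    intro j hj
    simp only [Finset.mem_Icc] at hj
    have h2 : (2 : ℕ) ∈ Finset.Icc 2 j := Finset.mem_Icc.mpr ⟨le_refl 2, hj.1⟩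
    have hs : n 2 ≤ ∑ m ∈ Finset.Icc 2 j, n m :=
      Finset.single_le_sum (fun _ _ => Nat.zero_le _) h2
    intro hc
    omega
  rw [he]
  simp

lemma Mprod_zero (n : ℕ → ℕ) (k : ℕ) (hn2 : 1 ≤ n 2) :
    Mprod n k 0 = !![1 + (n 1 : ℤ), 1; (n 1 : ℤ), 1] := by
  rw [Mprod_eq]
  have h1 : ((0 : ℤ) + (n 1 : ℤ) + 1).toNat = n 1 + 1 := by omega
  rw [h1, List.range_succ_eq_map, List.map_cons, List.prod_cons, List.map_map]
  have h2 : ((List.range (n 1)).map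
      ((fun i : ℕ => Amat n k (0 - (i : ℤ))) ∘ Nat.succ)).prod = !![1, 0; (n 1 : ℤ), 1] := by
    apply prodLrep
    intro i
    simp only [Function.comp]
    unfold Amat
    rw [if_pos (by push_cast; omega)]
  rw [h2]
  norm_num [Amat_zero n k hn2, U, Matrix.mul_fin_two]

/-- For `k ≥ 2`, positive integers `n₁, …, n_k` with `n_k ≥ 2`, and
`N = n₂ + ⋯ + n_k − 2`: writing `M_t = [[a_t, b_t],[c_t, d_t]]`, for every
`0 ≤ t ≤ N` one has `gcd(a_t + c_t, b_t + d_t) = 1` and `a_t + c_t > b_t + d_t ≥ 2`;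
moreover `(a_0 + c_0, b_0 + d_0) = (2n₁ + 1, 2)`. -/
theorem stmt2 (k : ℕ) (hk : 2 ≤ k) (n : ℕ → ℕ)
    (hn : ∀ j, 1 ≤ j → j ≤ k → 1 ≤ n j) (hnk : 2 ≤ n k)
    (N : ℤ) (hN : N = (∑ j ∈ Finset.Icc 2 k, (n j : ℤ)) - 2) :
    (∀ t : ℤ, 0 ≤ t → t ≤ N →
      Int.gcd (Mprod n k t 0 0 + Mprod n k t 1 0)
        (Mprod n k t 0 1 + Mprod n k t 1 1) = 1 ∧
      Mprod n k t 0 1 + Mprod n k t 1 1 < Mprod n k t 0 0 + Mprod n k t 1 0 ∧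
      2 ≤ Mprod n k t 0 1 + Mprod n k t 1 1) ∧
    Mprod n k 0 0 0 + Mprod n k 0 1 0 = 2 * (n 1 : ℤ) + 1 ∧
    Mprod n k 0 0 1 + Mprod n k 0 1 1 = 2 := by
  have hn2 : 1 ≤ n 2 := hn 2 one_le_two hk
  have hn1 : 1 ≤ n 1 := hn 1 le_rfl (by omega)
  have hinv : ∀ t : ℤ, 0 ≤ t → MInv (Mprod n k t) := by
    refine Int.le_induction ?_ ?_
    · rw [Mprod_zero n k hn2]
      refine ⟨?_, ?_, ?_, ?_, ?_⟩ <;> simp <;> omega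
    · intro t ht ih
      rw [Mprod_succ n k t ht]
      rcases AmatUL n k (t + 1) with h | h <;> rw [h]
      · exact invU ih
      · exact invL ih
  refine ⟨fun t ht _ => ?_, ?_, ?_⟩
  · obtain ⟨h1, h2, h3, h4, h5⟩ := hinv t ht
    refine ⟨?_, by linarith, by linarith⟩
    have hc : IsCoprime (Mprod n k t 0 0 + Mprod n k t 1 0)
        (Mprod n k t 0 1 + Mprod n k t 1 1) :=
      ⟨Mprod n k t 1 1, -(Mprod n k t 1 0), by linear_combination h1⟩
    exact Int.isCoprime_iff_gcd_eq_one.mp hc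
  · rw [Mprod_zero n k hn2]; simp; ring
  · rw [Mprod_zero n k hn2]; simp
end

section
/- Let p and q be coprime integers with 2 ≤ p < q, and suppose that q ≢ 1 (mod p) and q ≢ −1 (mod p). Then there exists an integer k with ⌊q/p⌋ + 2 ≤ k ≤ q − 2 such that ⌈kp/q⌉ = ⌈(k+1)p/q⌉. -/
/-- For coprime `2 ≤ p < q` with `q ≢ ±1 (mod p)`, there is an integer `k` with
`⌊q/p⌋ + 2 ≤ k ≤ q − 2` and `⌈kp/q⌉ = ⌈(k+1)p/q⌉`. -/
theorem stmt6 (p q : ℤ) (hp : 2 ≤ p) (hpq : p < q) (hcop : IsCoprime p q)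
    (h1 : ¬ q ≡ 1 [ZMOD p]) (h2 : ¬ q ≡ -1 [ZMOD p]) :
    ∃ k : ℤ, ⌊(q : ℚ) / p⌋ + 2 ≤ k ∧ k ≤ q - 2 ∧
      ⌈((k : ℚ) * p) / q⌉ = ⌈((k : ℚ) + 1) * p / q⌉ := by
  have hq0 : (0:ℤ) < q := by linarith
  have hp0 : (0:ℤ) < p := by linarith
  have hqQ : (0:ℚ) < (q:ℚ) := by exact_mod_cast hq0
  have hpQ : (0:ℚ) < (p:ℚ) := by exact_mod_cast hp0
  set a : ℤ := q / p with ha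
  set r : ℤ := q % p with hr
  have hqar : p * a + r = q := Int.mul_ediv_add_emod q p
  have hr0 : 0 ≤ r := Int.emod_nonneg q (by linarith)
  have hrp : r < p := Int.emod_lt_of_pos q hp0
  have hrne0 : r ≠ 0 := by
    intro h
    have hdvd : p ∣ q := Int.dvd_of_emod_eq_zero (by omega)
    have := IsCoprime.isUnit_of_dvd' hcop dvd_rfl hdvd
    rw [Int.isUnit_iff] at this
    omega
  have h1p : (1:ℤ) % p = 1 := Int.emod_eq_of_lt (by linarith) (by linarith)
  have hm1p : (-1:ℤ) % p = p - 1 := by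
    have h : (-1 : ℤ) = (p - 1) + p * (-1) := by ring
    rw [h, Int.add_mul_emod_self_left,
      Int.emod_eq_of_lt (by linarith) (by linarith)]
  have hrne1 : r ≠ 1 := by
    intro h
    exact h1 (show q % p = 1 % p by omega)
  have hrnep1 : r ≠ p - 1 := by
    intro h
    exact h2 (show q % p = (-1) % p by omega)
  have hr2 : 2 ≤ r := by omega
  have ha1 : 1 ≤ a := by
    rw [ha]
    exact (Int.le_ediv_iff_mul_le hp0).mpr (by linarith)
  have hqarQ : (p:ℚ) * a + r = q := by exact_mod_cast hqar
  have hr2Q : (2:ℚ) ≤ r := by exact_mod_cast hr2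
  have hrpQ : (r:ℚ) < p := by exact_mod_cast hrp
  have ha1Q : (1:ℚ) ≤ a := by exact_mod_cast ha1
  have hfloor : ⌊(q : ℚ) / p⌋ = a := by
    rw [Int.floor_eq_iff]
    constructor
    · rw [le_div_iff₀ hpQ]
      nlinarith
    · rw [div_lt_iff₀ hpQ]
      push_cast
      nlinarith
  simp only [hfloor]
  by_cases hq : q = p + 2
  · -- special case q = p + 2, p odd, p ≥ 5
    have hpodd : p % 2 = 1 := by
      rcases Int.emod_two_eq p with h | h
      · exfalso
        have h2p : (2:ℤ) ∣ p := Int.dvd_of_emod_eq_zero h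
        have h2q : (2:ℤ) ∣ q := by omega
        have := IsCoprime.isUnit_of_dvd' hcop h2p h2q
        rw [Int.isUnit_iff] at this
        omega
      · exact h
    have hale : a ≤ 1 := by nlinarith [hqar]
    have hav : a = 1 := le_antisymm hale ha1
    have hrv : r = 2 := by
      have h := hqar
      rw [hav] at h
      omega
    have hp5 : 5 ≤ p := by omega
    obtain ⟨m, hm⟩ : ∃ m : ℤ, p = 2 * m + 1 := ⟨p / 2, by omega⟩
    refine ⟨m + 1, by omega, by omega, ?_⟩
    have hmQ : (p:ℚ) = 2 * m + 1 := by exact_mod_cast hm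
    have hqQ' : (q:ℚ) = (p:ℚ) + 2 := by exact_mod_cast hq
    have e1 : ⌈(((m:ℚ) + 1) * p) / q⌉ = m + 1 := by
      rw [Int.ceil_eq_iff]
      constructor
      · rw [lt_div_iff₀ hqQ]
        push_cast
        nlinarith
      · rw [div_le_iff₀ hqQ]
        push_cast
        nlinarith
    have e2 : ⌈(((m:ℚ) + 1) + 1) * p / q⌉ = m + 1 := by
      rw [Int.ceil_eq_iff]
      constructor
      · rw [lt_div_iff₀ hqQ]
        push_cast
        nlinarith
      · rw [div_le_iff₀ hqQ]
        push_cast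
        nlinarith
    push_cast
    rw [e1, e2]
  · -- general case: contradiction from pigeonhole
    by_contra hcon'
    have hcon : ∀ k : ℤ, a + 2 ≤ k → k ≤ q - 2 →
        ⌈((k : ℚ) * p) / q⌉ ≠ ⌈((k : ℚ) + 1) * p / q⌉ := by
      intro k hk1 hk2 heq
      exact hcon' ⟨k, hk1, hk2, heq⟩
    have step : ∀ k : ℤ, a + 2 ≤ k → k ≤ q - 2 →
        ⌈((k : ℚ) * p) / q⌉ + 1 ≤ ⌈(((k+1 : ℤ) : ℚ) * p) / q⌉ := by
      intro k hk1 hk2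
      have hmono : ⌈((k : ℚ) * p) / q⌉ ≤ ⌈((k : ℚ) + 1) * p / q⌉ := by
        apply Int.ceil_le_ceil
        rw [div_le_div_iff_of_pos_right hqQ]
        nlinarith
      have hne := hcon k hk1 hk2
      have : ⌈((k : ℚ) * p) / q⌉ + 1 ≤ ⌈((k : ℚ) + 1) * p / q⌉ := by omega
      have hcast : (((k+1 : ℤ) : ℚ) * p) / q = ((k : ℚ) + 1) * p / q := by push_cast; ring
      rw [hcast]
      exact this
    have key : ∀ n : ℕ, a + 2 + n ≤ q - 1 →
        ⌈(((a + 2 : ℤ) : ℚ) * p) / q⌉ + n ≤ ⌈(((a + 2 + n : ℤ) : ℚ) * p) / q⌉ := by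
      intro n
      induction n with
      | zero => simp
      | succ n ih =>
        intro hn
        have hn' : a + 2 + n ≤ q - 1 := by push_cast at hn ⊢; omega
        have h1' := ih hn'
        have h2' := step (a + 2 + n) (by omega) (by push_cast at hn; omega)
        have hcast : ((a + 2 + (n+1 : ℕ) : ℤ) : ℚ) = (((a + 2 + n + 1 : ℤ)) : ℚ) := by
          push_cast; ring
        rw [hcast]
        push_cast at h1' h2' ⊢
        linarith
    have hn3 : a + 3 ≤ q := by nlinarith
    have hkey := key (q - 1 - (a + 2)).toNat (by omega)
    rw [show a + 2 + ((q - 1 - (a + 2)).toNat : ℤ) = q - 1 from by omega] at hkey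
    have hnv : (((q - 1 - (a + 2)).toNat : ℤ)) = q - a - 3 := by omega
    rw [hnv] at hkey
    have hP1 : 2 ≤ ⌈(((a + 2 : ℤ) : ℚ) * p) / q⌉ := by
      have : (1:ℤ) < ⌈(((a + 2 : ℤ) : ℚ) * p) / q⌉ := by
        rw [Int.lt_ceil, lt_div_iff₀ hqQ]
        push_cast
        nlinarith
      omega
    have hP2 : ⌈(((q - 1 : ℤ) : ℚ) * p) / q⌉ ≤ p := by
      rw [Int.ceil_le, div_le_iff₀ hqQ]
      push_cast
      nlinarith
    have hqle : q ≤ p + a + 1 := by omega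
    have hle0 : (a - 1) * (p - 1) ≤ 0 := by nlinarith
    have ha2 : a ≤ 1 := by nlinarith
    have hav : a = 1 := by omega
    have hqar' : p + r = q := by
      rw [hav] at hqar
      linarith
    exact hq (by omega)
end

section
/- Let m ≥ 2 and q ≥ 2 be integers (so that mq + 1 and q are coprime). Then: (i) ⌈k(mq+1)/q⌉ = km + 1 for all integers k with 1 ≤ k ≤ q; (ii) for every integer t ≥ 0, U^{t+1}·L^m = [[(t+1)m + 1, t+1],[m, 1]], a matrix [[a,b],[c,d]] with ad − bc = 1 and ad + bc = 2(t+1)m + 1. Consequently the middle-tunnel slope sequence of the (mq+1, q) torus knot, namely [1/(2m+1)], 4m+1, 6m+1, …, 2m(q−1)+1, coincides with its upper-tunnel slope sequence. -/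
lemma Upow (n : ℕ) : U ^ n = !![1, (n:ℤ); 0, 1] := by
  induction n with
  | zero => simp [Matrix.one_fin_two]
  | succ n ih =>
    rw [pow_succ, ih, U]
    push_cast
    ext i j
    fin_cases i <;> fin_cases j <;> simp [Matrix.mul_apply, Fin.sum_univ_two] <;> ring

lemma Lpow (n : ℕ) : L ^ n = !![1, 0; (n:ℤ), 1] := by
  induction n with
  | zero => simp [Matrix.one_fin_two]
  | succ n ih =>
    rw [pow_succ, ih, L]
    push_cast
    ext i j
    fin_cases i <;> fin_cases j <;> simp [Matrix.mul_apply, Fin.sum_univ_two] <;> ring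

/-- For `m, q ≥ 2`: `mq + 1` and `q` are coprime; (i) `⌈k(mq+1)/q⌉ = km + 1` for
`1 ≤ k ≤ q`; (ii) for every `t ≥ 0`, `U^(t+1)·L^m = [[(t+1)m+1, t+1],[m, 1]]`, a
matrix `[[a,b],[c,d]]` with `ad − bc = 1` and `ad + bc = 2(t+1)m + 1`. -/
theorem stmt9 (m q : ℕ) (hm : 2 ≤ m) (hq : 2 ≤ q) :
    Nat.Coprime (m * q + 1) q ∧
    (∀ k : ℕ, 1 ≤ k → k ≤ q →
      ⌈((k : ℚ) * ((m : ℚ) * q + 1)) / q⌉ = (k : ℤ) * m + 1) ∧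
    (∀ t : ℕ,
      U ^ (t + 1) * L ^ m = !![((t : ℤ) + 1) * m + 1, (t : ℤ) + 1; (m : ℤ), 1] ∧
      (U ^ (t + 1) * L ^ m) 0 0 * (U ^ (t + 1) * L ^ m) 1 1 -
        (U ^ (t + 1) * L ^ m) 0 1 * (U ^ (t + 1) * L ^ m) 1 0 = 1 ∧
      (U ^ (t + 1) * L ^ m) 0 0 * (U ^ (t + 1) * L ^ m) 1 1 +
        (U ^ (t + 1) * L ^ m) 0 1 * (U ^ (t + 1) * L ^ m) 1 0 =
          2 * ((t : ℤ) + 1) * m + 1) := by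
  refine ⟨?_, ?_, ?_⟩
  · simp [Nat.Coprime, Nat.gcd_comm, Nat.gcd_add_mul_right_left]
  · intro k hk hkq
    have hq0 : (0:ℚ) < q := by positivity
    rw [Int.ceil_eq_iff]
    push_cast
    constructor
    · rw [lt_div_iff₀ hq0]
      have hk' : (1:ℚ) ≤ k := by exact_mod_cast hk
      nlinarith
    · rw [div_le_iff₀ hq0]
      have hkq' : (k:ℚ) ≤ q := by exact_mod_cast hkq
      nlinarith
  · intro t
    have h : U ^ (t + 1) * L ^ m = !![((t : ℤ) + 1) * m + 1, (t : ℤ) + 1; (m : ℤ), 1] := by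
      rw [Upow, Lpow]
      push_cast
      ext i j
      fin_cases i <;> fin_cases j <;> simp [Matrix.mul_apply, Fin.sum_univ_two] <;> ring
    refine ⟨h, ?_, ?_⟩ <;> rw [h] <;> simp <;> ring
end

section
/- Let p > q ≥ 2 be coprime integers, and suppose p/q = [n₁, …, n_k] where k ≥ 2, all n_j are positive integers, and n_k ≥ 2. Then p ≡ 1 (mod q) or p ≡ −1 (mod q) if and only if k = 2, or k = 3 and n₂ = 1. -/
/-- The value of the continued fraction `[n_j, n_{j+1}, …, n_k]`:
`cfVal n j k = n_j + 1/(n_{j+1} + 1/(⋯ + 1/n_k))`. -/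
def cfVal (n : ℕ → ℕ) (j k : ℕ) : ℚ :=
  if _ : k ≤ j then (n j : ℚ) else (n j : ℚ) + (cfVal n (j + 1) k)⁻¹
termination_by k - j
decreasing_by omega

lemma cfVal_last (n : ℕ → ℕ) (j k : ℕ) (h : k ≤ j) : cfVal n j k = (n j : ℚ) := by
  rw [cfVal]; simp [h]

lemma cfVal_step (n : ℕ → ℕ) (j k : ℕ) (h : j < k) :
    cfVal n j k = (n j : ℚ) + (cfVal n (j + 1) k)⁻¹ := by
  rw [cfVal]; simp [Nat.not_le.2 h]

lemma cfVal_gt_one (n : ℕ → ℕ) (k : ℕ) (hnk : 2 ≤ n k)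
    (hn : ∀ j, 1 ≤ j → j ≤ k → 1 ≤ n j)
    (j : ℕ) (hj1 : 1 ≤ j) (hjk : j ≤ k) : 1 < cfVal n j k := by
  rcases eq_or_lt_of_le hjk with h | h
  · subst h
    rw [cfVal_last n j j le_rfl]
    exact_mod_cast hnk
  · have ih := cfVal_gt_one n k hnk hn (j + 1) (by omega) (by omega)
    rw [cfVal_step n j k h]
    have h1 : (1 : ℚ) ≤ n j := by exact_mod_cast hn j hj1 hjk
    have h2 : 0 < (cfVal n (j + 1) k)⁻¹ := inv_pos.2 (lt_trans zero_lt_one ih)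
    linarith
termination_by k - j
decreasing_by omega

lemma cfVal_not_int (n : ℕ → ℕ) (k : ℕ) (hnk : 2 ≤ n k)
    (hn : ∀ j, 1 ≤ j → j ≤ k → 1 ≤ n j)
    (j : ℕ) (hj1 : 1 ≤ j) (hjk : j < k) (m : ℤ) : cfVal n j k ≠ (m : ℚ) := by
  intro hEq
  have hy := cfVal_gt_one n k hnk hn (j + 1) (by omega) (by omega)
  have hy0 : 0 < (cfVal n (j + 1) k)⁻¹ := inv_pos.2 (lt_trans zero_lt_one hy)
  have hy1 : (cfVal n (j + 1) k)⁻¹ < 1 := by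
    rw [inv_lt_one_iff₀]; right; exact hy
  rw [cfVal_step n j k hjk] at hEq
  have hfrac : (cfVal n (j + 1) k)⁻¹ = (m : ℚ) - (n j : ℚ) := by linarith
  have : ((m - (n j : ℤ) : ℤ) : ℚ) = (cfVal n (j + 1) k)⁻¹ := by push_cast; linarith
  set d : ℤ := m - (n j : ℤ) with hd
  have h0 : (0 : ℚ) < (d : ℚ) := by rw [this]; exact hy0
  have h1 : ((d : ℚ)) < 1 := by rw [this]; exact hy1
  have h0' : 0 < d := by exact_mod_cast h0
  have h1' : d < 1 := by exact_mod_cast h1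
  omega

/-- For coprime `p > q ≥ 2` with `p/q = [n₁, …, n_k]`, `k ≥ 2`, all `n_j ≥ 1` and
`n_k ≥ 2`: `p ≡ ±1 (mod q)` if and only if `k = 2`, or `k = 3` and `n₂ = 1`. -/
theorem stmt13 (p q : ℤ) (hq : 2 ≤ q) (hpq : q < p) (hcop : IsCoprime p q)
    (k : ℕ) (hk : 2 ≤ k) (n : ℕ → ℕ) (hn : ∀ j, 1 ≤ j → j ≤ k → 1 ≤ n j)
    (hnk : 2 ≤ n k) (hcf : (p : ℚ) / q = cfVal n 1 k) :
    (p ≡ 1 [ZMOD q] ∨ p ≡ -1 [ZMOD q]) ↔ (k = 2 ∨ (k = 3 ∧ n 2 = 1)) := by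
  have hq0 : (0 : ℚ) < (q : ℚ) := by exact_mod_cast lt_of_lt_of_le zero_lt_two hq
  have hqne : (q : ℚ) ≠ 0 := ne_of_gt hq0
  set x : ℚ := cfVal n 2 k with hxdef
  have h1k : 1 < k := by omega
  have hcf1 : (p : ℚ) / q = (n 1 : ℚ) + x⁻¹ := by
    rw [hcf, cfVal_step n 1 k h1k]
  set r : ℤ := p - q * (n 1 : ℤ) with hrdef
  have hrq : (r : ℚ) = (p : ℚ) - q * (n 1 : ℚ) := by push_cast [hrdef]; ring
  have hxinv : x⁻¹ = (r : ℚ) / q := by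
    rw [hrq, sub_div, mul_div_cancel_left₀ _ hqne]
    linarith [hcf1]
  have hx1 : 1 < x := cfVal_gt_one n k hnk hn 2 (by omega) hk
  have hx0 : 0 < x := lt_trans zero_lt_one hx1
  have hxinv0 : 0 < x⁻¹ := inv_pos.2 hx0
  have hxinv1 : x⁻¹ < 1 := by rw [inv_lt_one_iff₀]; right; exact hx1
  have hr0 : 0 < r := by
    have : (0 : ℚ) < (r : ℚ) / q := by rw [← hxinv]; exact hxinv0
    have : (0 : ℚ) < (r : ℚ) := by
      rcases div_pos_iff.1 this with ⟨h, _⟩ | ⟨_, h⟩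
      · exact h
      · linarith
    exact_mod_cast this
  have hrltq : r < q := by
    have h1 : (r : ℚ) / q < 1 := by rw [← hxinv]; exact hxinv1
    have : (r : ℚ) < q := by
      rw [div_lt_one hq0] at h1; exact h1
    exact_mod_cast this
  have hx : x = (q : ℚ) / r := by
    rw [← inv_inv x, hxinv, inv_div]
  have hrne : (r : ℚ) ≠ 0 := by
    have : (0 : ℚ) < (r : ℚ) := by exact_mod_cast hr0
    exact ne_of_gt this
  have hpr : p ≡ r [ZMOD q] := by
    rw [Int.modEq_iff_dvd]
    exact ⟨-(n 1 : ℤ), by rw [hrdef]; ring⟩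
  have hcop' : IsCoprime r q := by
    have := hcop.add_mul_left_left (-(n 1 : ℤ))
    have heq : p + q * -(n 1 : ℤ) = r := by rw [hrdef]; ring
    rwa [heq] at this
  constructor
  · rintro (h1 | h1)
    · -- p ≡ 1, so r = 1, x = q is an integer, k = 2
      have hr1 : r = 1 := by
        have hmod : r ≡ 1 [ZMOD q] := hpr.symm.trans h1
        have hdvd : q ∣ 1 - r := Int.modEq_iff_dvd.1 hmod
        have := Int.eq_zero_of_abs_lt_dvd hdvd (by rw [abs_lt]; omega)
        omega
      have hxq : x = (q : ℚ) := by rw [hx, hr1]; simp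
      by_contra hcon
      push_neg at hcon
      have h2k : 2 < k := by omega
      exact cfVal_not_int n k hnk hn 2 (by omega) h2k q hxq
    · -- p ≡ -1, so r = q - 1
      have hr1 : r = q - 1 := by
        have hmod : r ≡ -1 [ZMOD q] := hpr.symm.trans h1
        have hdvd : q ∣ -1 - r := Int.modEq_iff_dvd.1 hmod
        have hdvd2 : q ∣ q - 1 - r := by
          have : q - 1 - r = (-1 - r) + q := by ring
          rw [this]; exact dvd_add hdvd (dvd_refl q)
        have := Int.eq_zero_of_abs_lt_dvd hdvd2 (by rw [abs_lt]; omega)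
        omega
      rcases eq_or_lt_of_le hq with hq2 | hq3
      · -- q = 2, r = 1, x = 2 integer, k = 2
        have hxq : x = (q : ℚ) := by
          rw [hx, hr1, ← hq2]; norm_num
        by_contra hcon
        push_neg at hcon
        have h2k : 2 < k := by omega
        exact cfVal_not_int n k hnk hn 2 (by omega) h2k q hxq
      · -- q ≥ 3, x = q/(q-1) ∈ (1,2)
        have hq3' : (3 : ℚ) ≤ (q : ℚ) := by exact_mod_cast hq3
        have hxlt2 : x < 2 := by
          rw [hx, hr1, div_lt_iff₀ (by push_cast; linarith)]
          push_cast
          linarith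
        have hkne2 : k ≠ 2 := by
          intro hk2
          subst hk2
          rw [hxdef, cfVal_last n 2 2 le_rfl] at hxlt2
          have : (2 : ℚ) ≤ (n 2 : ℚ) := by exact_mod_cast hnk
          linarith
        have h2k : 2 < k := by omega
        have hy1 : 1 < cfVal n 3 k := cfVal_gt_one n k hnk hn 3 (by omega) (by omega)
        set y : ℚ := cfVal n 3 k with hydef
        have hy0 : 0 < y⁻¹ := inv_pos.2 (lt_trans zero_lt_one hy1)
        have hxy : x = (n 2 : ℚ) + y⁻¹ := cfVal_step n 2 k h2k
        have hn2 : n 2 = 1 := by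
          have hge : (1 : ℚ) ≤ (n 2 : ℚ) := by exact_mod_cast hn 2 (by omega) (by omega)
          have hlt : (n 2 : ℚ) < 2 := by linarith
          have : n 2 < 2 := by exact_mod_cast hlt
          have : 1 ≤ n 2 := hn 2 (by omega) (by omega)
          omega
        have hyq : y = ((q - 1 : ℤ) : ℚ) := by
          have hq1ne : (q : ℚ) - 1 ≠ 0 := by linarith
          have hyinv : y⁻¹ = x - 1 := by rw [hxy, hn2]; push_cast; ring
          have hx1' : x - 1 = ((q : ℚ) - 1)⁻¹ := by
            rw [hx, hr1]
            push_cast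
            field_simp
            ring
          have hyne : y ≠ 0 := ne_of_gt (lt_trans zero_lt_one hy1)
          have : y = (x - 1)⁻¹ := by rw [← hyinv, inv_inv]
          rw [this, hx1', inv_inv]
          push_cast
          ring
        have hk3 : k = 3 := by
          by_contra hcon
          have h3k : 3 < k := by omega
          exact cfVal_not_int n k hnk hn 3 (by omega) h3k (q - 1) hyq
        exact Or.inr ⟨hk3, hn2⟩
  · rintro (hk2 | ⟨hk3, hn2⟩)
    · -- k = 2 : x = n 2 ≥ 2 integer, r = 1, p ≡ 1
      subst hk2
      have hx2 : x = (n 2 : ℚ) := cfVal_last n 2 2 le_rfl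
      have hn2ne : (n 2 : ℚ) ≠ 0 := by
        have : (2 : ℚ) ≤ (n 2 : ℚ) := by exact_mod_cast hnk
        linarith
      have heq : (q : ℚ) = (r : ℚ) * (n 2 : ℚ) := by
        have h0 : ((n 2 : ℚ))⁻¹ = (r : ℚ) / q := by rw [← hx2, hxinv]
        field_simp at h0
        linarith
      have heqZ : q = r * (n 2 : ℤ) := by exact_mod_cast heq
      have hdvd : r ∣ q := ⟨(n 2 : ℤ), heqZ⟩
      have hunit : IsUnit r := hcop'.isUnit_of_dvd' dvd_rfl hdvd
      have hr1 : r = 1 := by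
        rcases Int.isUnit_iff.1 hunit with h | h <;> omega
      left
      rw [← hr1]
      exact hpr
    · -- k = 3, n 2 = 1 : x = 1 + 1/(n 3), r = q - 1, p ≡ -1
      subst hk3
      have hx3 : x = (n 2 : ℚ) + ((n 3 : ℚ))⁻¹ := by
        rw [hxdef, cfVal_step n 2 3 (by omega), cfVal_last n 3 3 le_rfl]
      have hn3 : (2 : ℚ) ≤ (n 3 : ℚ) := by exact_mod_cast hnk
      have hn3ne : (n 3 : ℚ) ≠ 0 := by linarith
      have heq : (q : ℚ) * (n 3 : ℚ) = (r : ℚ) * ((n 3 : ℚ) + 1) := by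
        have h1 : x⁻¹ = (r : ℚ) / q := hxinv
        rw [hx3, hn2] at h1
        have hne : (1 : ℚ) + ((n 3 : ℚ))⁻¹ ≠ 0 := by positivity
        push_cast at h1
        field_simp at h1
        linarith
      have heqZ : q * (n 3 : ℤ) = r * ((n 3 : ℤ) + 1) := by exact_mod_cast heq
      set d : ℤ := q - r with hddef
      have hdr : r = d * (n 3 : ℤ) := by nlinarith [heqZ]
      have hdq : q = d * ((n 3 : ℤ) + 1) := by nlinarith [heqZ]
      have hunit : IsUnit d := hcop'.isUnit_of_dvd' ⟨(n 3 : ℤ), hdr⟩ ⟨(n 3 : ℤ) + 1, hdq⟩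
      have hd1 : d = 1 := by
        rcases Int.isUnit_iff.1 hunit with h | h <;> omega
      right
      have hr1 : r = q - 1 := by omega
      have : r ≡ -1 [ZMOD q] := by
        rw [Int.modEq_iff_dvd, hr1]
        exact ⟨-1, by ring⟩
      exact hpr.trans this
end
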